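/- Limit point case: let C, γ > 0, let μ ∈ M_a^{C,γ}(ℝ), let z ∈ ℂ with Im z > 0, let a ∈ ℝ ∖ {t_n : n}, and let u_D be the solution of the interface equation −u'' = z u for μ on [a, ∞) with u_D(a) = 0, u_D'(a) = 1. Then ∫_a^∞ |u_D(r)|² dr = ∞; equivalently, the Weyl radius r(z, b) = 1/(2·(Im z)·∫_a^b |u_D|²) tends to 0 as b → ∞. -/

import Mathlib

open Set Filter Topology MeasureTheory

/-- The part of the interval `J` off the atoms `{tₙ}`. -/
def offAtoms (ts : ℕ → ℝ) (J : Set ℝ) : Set ℝ := J \ Set.range ts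

/-- One-sided limits of `u` and its derivative exist at the atom `ts n`, and the
interface conditions `u(tₙ+) = √bₙ · u(tₙ-)`, `u'(tₙ+) = u'(tₙ-)/√bₙ` hold. -/
def InterfaceAt (ts bs : ℕ → ℝ) (S : Set ℝ) (u : ℝ → ℂ) (n : ℕ) : Prop :=
  ∃ uL uR duL duR : ℂ,
    Tendsto u (nhdsWithin (ts n) (S ∩ Iio (ts n))) (nhds uL) ∧
    Tendsto u (nhdsWithin (ts n) (S ∩ Ioi (ts n))) (nhds uR) ∧
    Tendsto (derivWithin u S) (nhdsWithin (ts n) (S ∩ Iio (ts n))) (nhds duL) ∧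
    Tendsto (derivWithin u S) (nhdsWithin (ts n) (S ∩ Ioi (ts n))) (nhds duR) ∧
    uR = (Real.sqrt (bs n) : ℂ) * uL ∧
    duR = duL / (Real.sqrt (bs n) : ℂ)

/-- `u` is a solution of the interface equation `-u'' = z·u` for the atomic measure
with atoms `ts n` and branching numbers `bs n`, on the interval `J`:
`u` is twice continuously differentiable on `J` off the atoms with `-u'' = z·u` there,
and at every atom in the interior of `J` it has one-sided limits satisfying
the interface conditions. -/
def IsInterfaceSolution (ts bs : ℕ → ℝ) (z : ℂ) (J : Set ℝ) (u : ℝ → ℂ) : Prop :=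
  ContDiffOn ℝ 2 u (offAtoms ts J) ∧
  (∀ x ∈ offAtoms ts J,
      -(derivWithin (derivWithin u (offAtoms ts J)) (offAtoms ts J) x) = z * u x) ∧
  (∀ n, ts n ∈ interior J → InterfaceAt ts bs (offAtoms ts J) u n)

/-- The Wronskian `W(f, g)(r) = f'(r)·g(r) - f(r)·g'(r)`, with derivatives taken
within the set `S`. -/
noncomputable def wron (S : Set ℝ) (f g : ℝ → ℂ) (r : ℝ) : ℂ :=
  derivWithin f S r * g r - f r * derivWithin g S r

/-- The Wronskian `W(f, ḡ)(r)` of `f` and the pointwise complex conjugate of `g`. -/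
noncomputable def wronConj (S : Set ℝ) (f g : ℝ → ℂ) (r : ℝ) : ℂ :=
  derivWithin f S r * (starRingEnd ℂ) (g r)
    - f r * (starRingEnd ℂ) (derivWithin g S r)

/-- The atomic measure `μ = Σₙ βₙ δ_{tₙ}` with weights `βₙ = (√bₙ + 1)/(√bₙ - 1)`. -/
noncomputable def treeMeasure (ts bs : ℕ → ℝ) : Measure ℝ :=
  Measure.sum fun n =>
    ENNReal.ofReal ((Real.sqrt (bs n) + 1) / (Real.sqrt (bs n) - 1)) • Measure.dirac (ts n)

/-- `u` is a nontrivial square-integrable solution of the interface equation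
`-u'' = z u` on `[a, ∞)`. -/
def IsL2Solution (ts bs : ℕ → ℝ) (z : ℂ) (a : ℝ) (u : ℝ → ℂ) : Prop :=
  IsInterfaceSolution ts bs z (Ici a) u ∧
  (∃ x ∈ offAtoms ts (Ici a), u x ≠ 0) ∧
  IntegrableOn (fun r => ‖u r‖ ^ 2) (Ioi a) volume

lemma LP_gap (γ : ℝ) (hγ : 0 < γ) (ts : ℕ → ℝ)
    (hsep : ∀ n m, n ≠ m → γ ≤ |ts n - ts m|) (x : ℝ) :
    ∃ ε > 0, ∀ m, ts m ≠ x → ε ≤ |ts m - x| := by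
  by_cases h : ∃ n, ts n ≠ x ∧ |ts n - x| < γ / 2
  · obtain ⟨n₀, hn₀, hn₀'⟩ := h
    refine ⟨min (γ / 2) |ts n₀ - x|, lt_min (by linarith) (abs_pos.mpr (sub_ne_zero.mpr hn₀)), ?_⟩
    intro m hm
    by_cases hm' : |ts m - x| < γ / 2
    · rcases eq_or_ne m n₀ with rfl | hne
      · exact min_le_right _ _
      · exfalso
        have := hsep m n₀ hne
        have : |ts m - ts n₀| ≤ |ts m - x| + |ts n₀ - x| := by
          have := abs_sub_abs_le_abs_sub (ts m - x) (ts n₀ - x)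
          calc |ts m - ts n₀| = |(ts m - x) - (ts n₀ - x)| := by ring_nf
            _ ≤ |ts m - x| + |ts n₀ - x| := abs_sub _ _
        linarith [hsep m n₀ hne]
    · exact le_trans (min_le_left _ _) (not_lt.mp hm')
  · push_neg at h
    exact ⟨γ / 2, by linarith, fun m hm => h m hm⟩

lemma LP_bdd (a b : ℝ) (D : Set ℝ) (haD : a ∉ D) (f : ℝ → ℂ)
    (hf : ContinuousOn f (Ici a \ D))
    (hlim : ∀ t ∈ D, a < t → (∃ l, Tendsto f (𝓝[<] t) (𝓝 l)) ∧
      (∃ l, Tendsto f (𝓝[>] t) (𝓝 l))) :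
    ∃ c : ℝ, ∀ r ∈ (Ici a \ D) ∩ Icc a b, ‖f r‖ ≤ c := by
  have key : ∀ p : ℝ, p ∈ Icc a b →
      ∃ U : Set ℝ, U ∈ 𝓝 p ∧ ∃ c : ℝ, ∀ r ∈ U ∩ (Ici a \ D), ‖f r‖ ≤ c := by
    intro p hp
    by_cases hpS : p ∈ Ici a \ D
    · have h1 : {r | ‖f r‖ ≤ ‖f p‖ + 1} ∈ 𝓝[Ici a \ D] p := by
        have := (hf p hpS).norm
        have h2 : Iio (‖f p‖ + 1) ∈ 𝓝 ‖f p‖ := Iio_mem_nhds (by linarith)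
        exact mem_of_superset (this h2) (fun r hr => le_of_lt (by simpa using hr))
      obtain ⟨U, hU, hsub⟩ := mem_nhdsWithin_iff_exists_mem_nhds_inter.mp h1
      exact ⟨U, hU, ‖f p‖ + 1, fun r hr => hsub ⟨hr.1, hr.2⟩⟩
    · have hpD : p ∈ D := by
        by_contra h
        exact hpS ⟨hp.1, h⟩
      have hap : a < p := lt_of_le_of_ne hp.1 (fun h => haD (h ▸ hpD))
      obtain ⟨⟨l₁, hl₁⟩, ⟨l₂, hl₂⟩⟩ := hlim p hpD hap
      have h1 : {r | ‖f r‖ ≤ ‖l₁‖ + 1} ∈ 𝓝[<] p :=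
        mem_of_superset (hl₁.norm (Iio_mem_nhds (show ‖l₁‖ < ‖l₁‖ + 1 by linarith)))
          (fun r hr => le_of_lt (by simpa using hr))
      have h2 : {r | ‖f r‖ ≤ ‖l₂‖ + 1} ∈ 𝓝[>] p :=
        mem_of_superset (hl₂.norm (Iio_mem_nhds (show ‖l₂‖ < ‖l₂‖ + 1 by linarith)))
          (fun r hr => le_of_lt (by simpa using hr))
      obtain ⟨U₁, hU₁, hsub₁⟩ := mem_nhdsWithin_iff_exists_mem_nhds_inter.mp h1
      obtain ⟨U₂, hU₂, hsub₂⟩ := mem_nhdsWithin_iff_exists_mem_nhds_inter.mp h2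
      refine ⟨U₁ ∩ U₂, inter_mem hU₁ hU₂, max (‖l₁‖ + 1) (‖l₂‖ + 1), ?_⟩
      intro r hr
      rcases lt_trichotomy r p with h | h | h
      · exact le_trans (hsub₁ ⟨hr.1.1, h⟩) (le_max_left _ _)
      · exact absurd (h ▸ hpD) hr.2.2
      · exact le_trans (hsub₂ ⟨hr.1.2, h⟩) (le_max_right _ _)
  choose! U hU c hc using key
  obtain ⟨t, htIcc, htcov⟩ := (isCompact_Icc (a := a) (b := b)).elim_nhds_subcover U hU
  refine ⟨∑ p ∈ t, |c p|, ?_⟩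
  intro r hr
  have : r ∈ ⋃ p ∈ t, U p := htcov hr.2
  simp only [mem_iUnion] at this
  obtain ⟨p, hpt, hrU⟩ := this
  calc ‖f r‖ ≤ c p := hc p (htIcc p hpt) r ⟨hrU, hr.1⟩
    _ ≤ |c p| := le_abs_self _
    _ ≤ ∑ q ∈ t, |c q| := Finset.single_le_sum (fun q _ => abs_nonneg (c q)) hpt

lemma LP_integrableOn (a b : ℝ) (D : Set ℝ) (hDc : D.Countable) (g : ℝ → ℝ)
    (hg : ContinuousOn g (Ioi a \ D))
    (hbd : ∃ c, ∀ r ∈ (Ici a \ D) ∩ Icc a b, |g r| ≤ c) :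
    IntegrableOn g (Icc a b) volume := by
  obtain ⟨c, hc⟩ := hbd
  have hDm : MeasurableSet (Ioi a \ D) := measurableSet_Ioi.diff hDc.measurableSet
  have hae : (Icc a b : Set ℝ) =ᵐ[volume] ((Icc a b ∩ (Ioi a \ D) : Set ℝ)) := by
    rw [Filter.eventuallyEq_set]
    have hnull : volume (({a} ∪ D : Set ℝ)) = 0 :=
      measure_union_null (measure_singleton a) (hDc.measure_zero _)
    have hmem : ∀ᵐ r : ℝ, r ∉ (({a} ∪ D : Set ℝ)) :=
      measure_eq_zero_iff_ae_notMem.mp hnull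
    filter_upwards [hmem] with r hr
    simp only [mem_union, mem_singleton_iff, not_or] at hr
    constructor
    · intro h
      exact ⟨h, ⟨lt_of_le_of_ne h.1 (Ne.symm hr.1), hr.2⟩⟩
    · exact fun h => h.1
  rw [IntegrableOn, Measure.restrict_congr_set hae]
  have hm : MeasurableSet (Icc a b ∩ (Ioi a \ D)) := measurableSet_Icc.inter hDm
  constructor
  · exact ((hg.mono (inter_subset_right)).aestronglyMeasurable hm)
  · refine HasFiniteIntegral.restrict_of_bounded (C := c) ?_ ?_
    · exact lt_of_le_of_lt (measure_mono inter_subset_left) measure_Icc_lt_top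
    · filter_upwards [ae_restrict_mem hm] with r hr
      have : r ∈ (Ici a \ D) ∩ Icc a b :=
        ⟨⟨mem_Ici.mpr (le_of_lt hr.2.1), hr.2.2⟩, hr.1⟩
      simpa [Real.norm_eq_abs] using hc r this

lemma LP_sup_lintegral (a : ℝ) (h : ℝ → ENNReal)
    (hmeas : AEMeasurable h (volume.restrict (Ioi a))) :
    ∫⁻ r in Ioi a, h r = ⨆ n : ℕ, ∫⁻ r in Ioc a (a + n), h r := by
  set h' := hmeas.mk h with hh'
  have hae : h =ᵐ[volume.restrict (Ioi a)] h' := hmeas.ae_eq_mk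
  have haen : ∀ n : ℕ, h =ᵐ[volume.restrict (Ioc a (a + n))] h' := by
    intro n
    refine ae_mono (Measure.restrict_mono (fun r hr => hr.1) le_rfl) hae
  have hmeas' : Measurable h' := hmeas.measurable_mk
  rw [lintegral_congr_ae hae]
  rw [iSup_congr (fun n => lintegral_congr_ae (haen n))]
  have hunion : (Ioi a : Set ℝ) = ⋃ n : ℕ, Ioc a (a + n) := by
    ext r
    simp only [mem_Ioi, mem_iUnion, mem_Ioc]
    constructor
    · intro hr
      obtain ⟨n, hn⟩ := exists_nat_ge (r - a)
      exact ⟨n, hr, by linarith⟩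
    · rintro ⟨n, hn, _⟩; exact hn
  have hind : ∀ n : ℕ, ∫⁻ r in Ioc a (a + n), h' r
      = ∫⁻ r, (Ioc a (a + n)).indicator h' r := by
    intro n
    rw [← lintegral_indicator measurableSet_Ioc]
  rw [hunion, ← lintegral_indicator (MeasurableSet.iUnion (fun n => measurableSet_Ioc))]
  simp_rw [hind]
  rw [← lintegral_iSup]
  · congr 1
    funext r
    by_cases hr : r ∈ ⋃ n : ℕ, Ioc a (a + n)
    · simp only [indicator_of_mem hr]
      obtain ⟨n₀, hn₀⟩ := mem_iUnion.mp hr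
      apply le_antisymm
      · exact le_iSup_iff.mpr (fun b hb => by
          simpa [indicator_of_mem hn₀] using hb n₀)
      · exact iSup_le (fun n => indicator_le_self _ _ r)
    · simp only [indicator_of_notMem hr]
      symm
      simp only [ENNReal.iSup_eq_zero]
      intro n
      have : r ∉ Ioc a (a + n) := fun hn => hr (mem_iUnion.mpr ⟨n, hn⟩)
      simp [indicator_of_notMem this]
  · exact fun n => hmeas'.indicator measurableSet_Ioc
  · intro m n hmn r
    by_cases hr : r ∈ Ioc a (a + m)
    · have hcast : (m : ℝ) ≤ (n : ℝ) := Nat.cast_le.mpr hmn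
      have : r ∈ Ioc a (a + n) := ⟨hr.1, le_trans hr.2 (by linarith)⟩
      simp [indicator_of_mem hr, indicator_of_mem this]
    · simp [indicator_of_notMem hr]

lemma LP_tendsto_integral_atTop (a : ℝ) (g : ℝ → ℝ) (hg0 : ∀ r, 0 ≤ g r)
    (hInt : ∀ b, IntegrableOn g (Icc a b) volume)
    (hmeas : AEMeasurable (fun r => ENNReal.ofReal (g r)) (volume.restrict (Ioi a)))
    (htop : ∫⁻ r in Ioi a, ENNReal.ofReal (g r) = ⊤) :
    Tendsto (fun y => ∫ r in a..y, g r) atTop atTop := by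
  have hii : ∀ p q : ℝ, a ≤ p → a ≤ q → IntervalIntegrable g volume p q := by
    intro p q hp hq
    rw [intervalIntegrable_iff]
    refine (hInt (max p q)).mono_set ?_
    exact fun r hr => ⟨le_trans (le_min hp hq) (le_of_lt hr.1), hr.2⟩
  have hof : ∀ y, a ≤ y → ENNReal.ofReal (∫ r in a..y, g r)
      = ∫⁻ r in Ioc a y, ENNReal.ofReal (g r) := by
    intro y hy
    rw [intervalIntegral.integral_of_le hy]
    exact ofReal_integral_eq_lintegral_ofReal
      ((hInt y).mono_set Ioc_subset_Icc_self)
      (Filter.Eventually.of_forall (fun r => hg0 r))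
  rw [tendsto_atTop]
  intro K
  have hsup := LP_sup_lintegral a _ hmeas
  rw [htop] at hsup
  have hK : ∃ n : ℕ, ENNReal.ofReal (max K 0) < ∫⁻ r in Ioc a (a + n), ENNReal.ofReal (g r) := by
    by_contra hcon
    push_neg at hcon
    have : (⊤ : ENNReal) ≤ ENNReal.ofReal (max K 0) := hsup ▸ iSup_le hcon
    exact absurd (lt_of_le_of_lt this ENNReal.ofReal_lt_top) (lt_irrefl _)
  obtain ⟨n, hn⟩ := hK
  have hy₀ : a ≤ a + n := by linarith [Nat.cast_nonneg (α := ℝ) n]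
  have hGy₀ : max K 0 < ∫ r in a..(a + n), g r := by
    rw [← hof _ hy₀] at hn
    exact (ENNReal.ofReal_lt_ofReal_iff_of_nonneg (le_max_right _ _)).mp hn
  filter_upwards [eventually_ge_atTop (a + (n : ℝ))] with y hy
  have hay : a ≤ y := le_trans hy₀ hy
  have hadd : (∫ r in a..(a + n), g r) + ∫ r in (a + n)..y, g r = ∫ r in a..y, g r :=
    intervalIntegral.integral_add_adjacent_intervals (hii _ _ le_rfl hy₀) (hii _ _ hy₀ hay)
  have hnn : 0 ≤ ∫ r in (a + n)..y, g r :=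
    intervalIntegral.integral_nonneg hy (fun r _ => hg0 r)
  have := le_max_left K 0
  linarith

lemma LP_piecing
    (a : ℝ) (D : Set ℝ)
    (hDgap : ∀ t ∈ D, a < t → ∃ δ > 0, Ioo (t - δ) t ⊆ Ioi a \ D ∧ Ioo t (t + δ) ⊆ Ioi a \ D)
    (F φ : ℝ → ℝ)
    (hFd : ∀ x ∈ Ioi a \ D, HasDerivAt F (φ x) x)
    (hFa : Tendsto F (𝓝[>] a) (𝓝 (F a)))
    (haD : ∃ δ > 0, Ioo a (a + δ) ⊆ Ioi a \ D)
    (hO : ∀ x ∈ Ioi a \ D, ∃ δ > 0, Ioo (x - δ) (x + δ) ⊆ Ioi a \ D)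
    (hjump : ∀ t ∈ D, a < t → ∃ lL lR, Tendsto F (𝓝[<] t) (𝓝 lL) ∧
        Tendsto F (𝓝[>] t) (𝓝 lR) ∧ lL ≤ lR)
    (hφ : ∀ b, IntegrableOn φ (Icc a b) volume) :
    ∀ x y, x ∈ Ici a \ D → y ∈ Ici a \ D → x ≤ y →
      F x + ∫ r in x..y, φ r ≤ F y := by
  intro x y hx hy hxy
  rcases eq_or_lt_of_le hxy with rfl | hxy'
  · simp
  have hax : a ≤ x := hx.1
  have hay : a ≤ y := le_trans hax hxy
  -- interval integrability between any two points ≥ a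
  have hii : ∀ p q : ℝ, a ≤ p → a ≤ q → IntervalIntegrable φ volume p q := by
    intro p q hp hq
    rw [intervalIntegrable_iff]
    refine (hφ (max p q)).mono_set ?_
    intro r hr
    rcases hr with ⟨h1, h2⟩
    constructor
    · exact le_trans (le_min hp hq) (le_of_lt h1)
    · exact h2
  -- continuity of the primitive
  have hprim : ContinuousOn (fun w => ∫ r in x..w, φ r) (Icc x y) := by
    have h := intervalIntegral.continuousOn_primitive_interval (a := x) (b := y)
      (μ := volume) (f := φ) ?_
    · rwa [uIcc_of_le hxy] at h
    · rw [uIcc_of_le hxy]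
      exact (hφ y).mono_set (Icc_subset_Icc_left hax)
  -- the FTC on good intervals
  have ftc : ∀ p q : ℝ, p ≤ q → a ≤ p → Tendsto F (𝓝[>] p) (𝓝 (F p)) →
      (∀ r, r ∈ Ioc p q → r ∈ Ioi a \ D) → (∫ r in p..q, φ r) = F q - F p := by
    intro p q hpq hap hFp hsub
    rcases eq_or_lt_of_le hpq with rfl | hpq'
    · simp
    refine intervalIntegral.integral_eq_sub_of_hasDerivAt_of_le hpq ?_ ?_ (hii p q hap (le_trans hap hpq))
    · intro r hr
      rcases eq_or_lt_of_le hr.1 with rfl | hrp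
      · -- continuity at left endpoint
        rw [continuousWithinAt_diff_self.symm] at *
        refine (hFp.mono_left (nhdsWithin_mono _ ?_))
        intro w hw
        exact lt_of_le_of_ne hw.1.1 (Ne.symm (by simpa using hw.2))
      · exact ((hFd r (hsub r ⟨hrp, hr.2⟩)).continuousAt).continuousWithinAt
    · intro r hr
      exact hFd r (hsub r ⟨hr.1, le_of_lt hr.2⟩)
  -- the set of points up to which the conclusion holds
  set T : Set ℝ := {s | s ∈ Icc x y ∧ ∀ w, w ∈ Ici a \ D → w ∈ Icc x s →
      F x + ∫ r in x..w, φ r ≤ F w} with hT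
  have hxT : x ∈ T := by
    refine ⟨⟨le_refl x, hxy⟩, ?_⟩
    intro w hw hw2
    have : w = x := le_antisymm hw2.2 hw2.1
    subst this
    simp
  have hTne : T.Nonempty := ⟨x, hxT⟩
  have hTbdd : BddAbove T := ⟨y, fun s hs => hs.1.2⟩
  have hxs : x ≤ sSup T := le_csSup hTbdd hxT
  have hsy : sSup T ≤ y := csSup_le hTne (fun s hs => hs.1.2)
  have has : a ≤ sSup T := le_trans hax hxs
  have claimA : ∀ w, w ∈ Ici a \ D → x ≤ w → w < sSup T →
      F x + ∫ r in x..w, φ r ≤ F w := by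
    intro w hw hxw hws
    obtain ⟨s, hsT, hws'⟩ := exists_lt_of_lt_csSup hTne hws
    exact hsT.2 w hw ⟨hxw, hws'.le⟩
  have claimB : ∀ L : ℝ, x < sSup T → Tendsto F (𝓝[<] sSup T) (𝓝 L) →
      (∃ δ > 0, Ioo (sSup T - δ) (sSup T) ⊆ Ioi a \ D) →
      F x + ∫ r in x..sSup T, φ r ≤ L := by
    rintro L hxs' hFL ⟨δ, hδ, hsub⟩
    have h1 : Tendsto (fun w => ∫ r in x..w, φ r) (𝓝[<] sSup T)
        (𝓝 (∫ r in x..sSup T, φ r)) := by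
      have hc := hprim.continuousWithinAt (show sSup T ∈ Icc x y from ⟨hxs, hsy⟩)
      rw [← nhdsWithin_Ioo_eq_nhdsLT hxs']
      exact hc.tendsto.mono_left (nhdsWithin_mono _
        (fun w hw => ⟨le_of_lt hw.1, le_trans (le_of_lt hw.2) hsy⟩))
    have h2 : Tendsto (fun w => F w - ∫ r in x..w, φ r) (𝓝[<] sSup T)
        (𝓝 (L - ∫ r in x..sSup T, φ r)) := hFL.sub h1
    have hev : ∀ᶠ w in 𝓝[<] sSup T, F x ≤ F w - ∫ r in x..w, φ r := by
      have hmem : Ioo (max x (sSup T - δ)) (sSup T) ∈ 𝓝[<] sSup T :=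
        Ioo_mem_nhdsLT_of_mem ⟨max_lt hxs' (by linarith), le_refl _⟩
      filter_upwards [hmem] with w hw
      have hwO : w ∈ Ioi a \ D := hsub ⟨lt_of_le_of_lt (le_max_right _ _) hw.1, hw.2⟩
      have := claimA w ⟨mem_Ici.mpr (le_of_lt hwO.1), hwO.2⟩
        (le_of_lt (lt_of_le_of_lt (le_max_left _ _) hw.1)) hw.2
      linarith
    have := ge_of_tendsto h2 hev
    linarith
  -- sSup T = y and the conclusion holds there
  by_cases hsDy : sSup T < y
  · exfalso
    -- we will find s' ∈ T with sSup T < s'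
    suffices hsuff : ∃ s', s' ∈ T ∧ sSup T < s' by
      obtain ⟨s', hs'T, hlt⟩ := hsuff
      exact absurd (le_csSup hTbdd hs'T) (not_le.mpr hlt)
    have ext : ∀ (lR δ : ℝ), 0 < δ → Ioo (sSup T) (sSup T + δ) ⊆ Ioi a \ D →
        Tendsto F (𝓝[>] (sSup T)) (𝓝 lR) →
        F x + (∫ r in x..sSup T, φ r) ≤ lR →
        (∀ w, w ∈ Ici a \ D → w ∈ Icc x (sSup T) → F x + ∫ r in x..w, φ r ≤ F w) →
        ∃ s', s' ∈ T ∧ sSup T < s' := by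
      intro lR δ hδ hsub hFr hlR hupto
      set s' := min y (sSup T + δ/2) with hs'def
      have hs0s' : sSup T < s' := lt_min hsDy (by linarith)
      refine ⟨s', ⟨⟨le_trans hxs (le_of_lt hs0s'), min_le_left _ _⟩, ?_⟩, hs0s'⟩
      intro w hw hw2
      rcases le_or_gt w (sSup T) with hcase | hcase
      · exact hupto w hw ⟨hw2.1, hcase⟩
      · have hwO : w ∈ Ioo (sSup T) (sSup T + δ) :=
          ⟨hcase, lt_of_le_of_lt (le_trans hw2.2 (min_le_right _ _)) (by linarith)⟩
        have haw : a ≤ w := le_trans has (le_of_lt hcase)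
        have hkey : F w = lR + ∫ r in sSup T..w, φ r := by
          have hev : ∀ᶠ t' in 𝓝[>] (sSup T),
              F t' = F w - (∫ r in sSup T..w, φ r) + ∫ r in sSup T..t', φ r := by
            filter_upwards [Ioo_mem_nhdsGT_of_mem ⟨le_refl _, hcase⟩] with t' ht'
            have hat' : a ≤ t' := le_trans has (le_of_lt ht'.1)
            have h1 : (∫ r in sSup T..t', φ r) + ∫ r in t'..w, φ r
                = ∫ r in sSup T..w, φ r :=
              intervalIntegral.integral_add_adjacent_intervals
                (hii _ _ has hat') (hii _ _ hat' haw)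
            have ht'O : t' ∈ Ioi a \ D := hsub ⟨ht'.1, lt_trans ht'.2 hwO.2⟩
            have h2 : (∫ r in t'..w, φ r) = F w - F t' := by
              refine ftc t' w (le_of_lt ht'.2) hat' ?_ ?_
              · exact ((hFd t' ht'O).continuousAt.tendsto).mono_left nhdsWithin_le_nhds
              · intro r hr
                exact hsub ⟨lt_trans ht'.1 hr.1, lt_of_le_of_lt hr.2 hwO.2⟩
            linarith
          have hlim1 : Tendsto
              (fun t' => F w - (∫ r in sSup T..w, φ r) + ∫ r in sSup T..t', φ r)
              (𝓝[>] (sSup T)) (𝓝 (F w - (∫ r in sSup T..w, φ r) + 0)) := by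
            refine tendsto_const_nhds.add ?_
            have hint : IntegrableOn φ (uIcc (sSup T) w) volume := by
              rw [uIcc_of_le (le_of_lt hcase)]
              exact (hφ w).mono_set (Icc_subset_Icc_left has)
            have hc := (intervalIntegral.continuousOn_primitive_interval
              (a := sSup T) (b := w) hint).continuousWithinAt
              (left_mem_uIcc (a := sSup T) (b := w))
            rw [uIcc_of_le (le_of_lt hcase)] at hc
            have : (∫ r in sSup T..(sSup T), φ r) = 0 := intervalIntegral.integral_same
            rw [← nhdsWithin_Ioo_eq_nhdsGT hcase]
            have hc2 := hc.tendsto.mono_left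
              (nhdsWithin_mono _ (Ioo_subset_Icc_self (a := sSup T) (b := w)))
            rwa [this] at hc2
          have h3 : Tendsto F (𝓝[>] (sSup T))
              (𝓝 (F w - (∫ r in sSup T..w, φ r) + 0)) :=
            Tendsto.congr' (hev.mono fun t' ht' => ht'.symm) hlim1
          have h4 := tendsto_nhds_unique hFr h3
          linarith
        have h5 : (∫ r in x..sSup T, φ r) + ∫ r in sSup T..w, φ r
            = ∫ r in x..w, φ r :=
          intervalIntegral.integral_add_adjacent_intervals (hii _ _ hax has)
            (hii _ _ has haw)
        rw [hkey]
        linarith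
    -- now the three cases
    rcases eq_or_lt_of_le hxs with hxs0 | hxs0
    · -- sSup T = x
      have hxS : x ∈ Ici a \ D := hx
      rcases eq_or_lt_of_le hax with hax0 | hax0
      · -- x = a
        obtain ⟨δ, hδ, hsub⟩ := haD
        refine ext (F x) δ hδ ?_ ?_ (by rw [← hxs0]; simp) ?_
        · rw [← hxs0, ← hax0]; exact hsub
        · rw [← hxs0, ← hax0]; exact (hax0 ▸ hFa)
        · intro w hw hw2
          have : w = x := le_antisymm (hxs0 ▸ hw2.2) hw2.1
          subst this; simp
      · have hxO : x ∈ Ioi a \ D := ⟨hax0, hx.2⟩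
        obtain ⟨δ, hδ, hsub⟩ := hO x hxO
        refine ext (F x) δ hδ ?_ ?_ (by rw [← hxs0]; simp) ?_
        · rw [← hxs0]
          exact fun r hr => hsub ⟨by linarith [hr.1, hδ], hr.2⟩
        · rw [← hxs0]
          exact ((hFd x hxO).continuousAt.tendsto).mono_left nhdsWithin_le_nhds
        · intro w hw hw2
          have : w = x := le_antisymm (hxs0 ▸ hw2.2) hw2.1
          subst this; simp
    · by_cases hsD : sSup T ∈ D
      · -- atom case
        have has0 : a < sSup T := lt_of_le_of_lt hax hxs0
        obtain ⟨lL, lR, hFL, hFR, hLR⟩ := hjump _ hsD has0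
        obtain ⟨δ, hδ, hsubL, hsubR⟩ := hDgap _ hsD has0
        have hB := claimB lL hxs0 hFL ⟨δ, hδ, hsubL⟩
        refine ext lR δ hδ hsubR hFR (by linarith) ?_
        intro w hw hw2
        rcases eq_or_lt_of_le hw2.2 with heq | hlt
        · exact absurd (heq ▸ hsD) hw.2
        · exact claimA w hw hw2.1 hlt
      · -- interior non-atom case
        have hsO : sSup T ∈ Ioi a \ D := ⟨lt_of_le_of_lt hax hxs0, hsD⟩
        obtain ⟨δ, hδ, hsub⟩ := hO _ hsO
        have hFc : Tendsto F (𝓝 (sSup T)) (𝓝 (F (sSup T))) :=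
          (hFd _ hsO).continuousAt.tendsto
        have hB := claimB (F (sSup T)) hxs0 (hFc.mono_left nhdsWithin_le_nhds)
          ⟨δ, hδ, fun r hr => hsub ⟨hr.1, by linarith [hr.2, hδ]⟩⟩
        refine ext (F (sSup T)) δ hδ
          (fun r hr => hsub ⟨by linarith [hr.1, hδ], hr.2⟩)
          (hFc.mono_left nhdsWithin_le_nhds) hB ?_
        intro w hw hw2
        rcases eq_or_lt_of_le hw2.2 with heq | hlt
        · subst heq; exact hB
        · exact claimA w hw hw2.1 hlt
  · -- sSup T = y
    have hsy' : sSup T = y := le_antisymm hsy (not_lt.mp hsDy)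
    have hxy2 : x < y := hxy'
    have hyO : y ∈ Ioi a \ D := ⟨lt_of_le_of_lt hax hxy2, hy.2⟩
    obtain ⟨δ, hδ, hsub⟩ := hO y hyO
    have hFy : Tendsto F (𝓝[<] y) (𝓝 (F y)) :=
      ((hFd y hyO).continuousAt.tendsto).mono_left nhdsWithin_le_nhds
    have := claimB (F y) (by rwa [hsy']) (by rwa [hsy'])
      ⟨min δ (y - a), lt_min hδ (by linarith), ?_⟩
    · rwa [hsy'] at this
    · rw [hsy']
      intro w hw
      constructor
      · have : y - (y - a) ≤ y - min δ (y - a) := by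
          have := min_le_right δ (y - a); linarith
        have := hw.1; simp only [mem_Ioi]; linarith
      · intro hwD
        have hww : w ∈ Ioo (y - δ) (y + δ) := by
          constructor
          · have := min_le_left δ (y - a); have := hw.1; linarith
          · have := hw.2; linarith
        exact (hsub hww).2 hwD

set_option maxHeartbeats 4000000 in
/-- limit point case: for `μ ∈ M_a^{C,γ}(ℝ)`, `Im z > 0` and the solution
`u_D` on `[a, ∞)` with `u_D(a) = 0`, `u_D'(a) = 1`, one has `∫ₐ^∞ |u_D|² = ∞`;
equivalently, the Weyl radius `r(z, b) = 1/(2·Im z·∫ₐ^b |u_D|²)` tends to `0` as `b → ∞`. -/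
theorem limit_point_case
    (C γ : ℝ) (hC : 0 < C) (hγ : 0 < γ)
    (ts bs : ℕ → ℝ)
    (hsep : ∀ n m, n ≠ m → γ ≤ |ts n - ts m|)
    (hbs : ∀ n, 1 < bs n)
    (hbound : ∀ x : ℝ, treeMeasure ts bs (Set.Icc x (x + 1)) ≤ ENNReal.ofReal C)
    (z : ℂ) (hz : 0 < z.im) (a : ℝ) (ha : a ∉ Set.range ts)
    (uD : ℝ → ℂ)
    (huD : IsInterfaceSolution ts bs z (Ici a) uD)
    (hDa : uD a = 0) (hDa' : derivWithin uD (offAtoms ts (Ici a)) a = 1) :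
    (∫⁻ r in Ioi a, ENNReal.ofReal (‖uD r‖ ^ 2)) = ⊤ ∧
    Tendsto (fun b : ℝ => 1 / (2 * z.im * ∫ r in a..b, ‖uD r‖ ^ 2)) atTop (nhds 0) := by
  obtain ⟨hC2, heq, hint⟩ := huD
  set D : Set ℝ := Set.range ts with hDdef
  have hSalt : offAtoms ts (Ici a) = Ici a \ D := rfl
  rw [hSalt] at hC2 heq hDa' hint
  set u' : ℝ → ℂ := derivWithin uD (Ici a \ D) with hu'def
  have haD : a ∉ D := ha
  have hDc : D.Countable := countable_range ts
  have haS : a ∈ Ici a \ D := ⟨Set.self_mem_Ici, haD⟩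
  have hOsubS : Ioi a \ D ⊆ Ici a \ D := fun r hr => ⟨mem_Ici.mpr (le_of_lt hr.1), hr.2⟩
  have hgap : ∀ x : ℝ, ∃ ε > 0, ∀ m, ts m ≠ x → ε ≤ |ts m - x| := LP_gap γ hγ ts hsep
  -- no atoms just to the right of a
  have haO : ∃ δ > 0, Ioo a (a + δ) ⊆ Ioi a \ D := by
    obtain ⟨ε, hε, hεsep⟩ := hgap a
    refine ⟨ε, hε, fun r hr => ⟨hr.1, ?_⟩⟩
    rintro ⟨m, rfl⟩
    have h1 : ts m ≠ a := fun h => ha ⟨m, h⟩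
    have := hεsep m h1
    rw [abs_of_pos (by linarith [hr.1] : (0:ℝ) < ts m - a)] at this
    linarith [hr.2]
  -- around points off atoms
  have hOO : ∀ x ∈ Ioi a \ D, ∃ δ > 0, Ioo (x - δ) (x + δ) ⊆ Ioi a \ D := by
    rintro x ⟨hax, hxD⟩
    obtain ⟨ε, hε, hεsep⟩ := hgap x
    refine ⟨min ε (x - a), lt_min hε (by linarith [mem_Ioi.mp hax]), fun r hr => ?_⟩
    have h1 : x - (x - a) ≤ x - min ε (x - a) := by
      have := min_le_right ε (x - a); linarith
    refine ⟨by simp only [mem_Ioi]; have := hr.1; linarith, ?_⟩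
    rintro ⟨m, rfl⟩
    have h2 : ts m ≠ x := fun h => hxD ⟨m, h⟩
    have h3 := hεsep m h2
    have h4 : |ts m - x| < min ε (x - a) := abs_sub_lt_iff.mpr ⟨by linarith [hr.2], by linarith [hr.1]⟩
    have := min_le_left ε (x - a)
    linarith
  -- around atoms
  have hDgapO : ∀ t ∈ D, a < t → ∃ δ > 0,
      Ioo (t - δ) t ⊆ Ioi a \ D ∧ Ioo t (t + δ) ⊆ Ioi a \ D := by
    intro t htD hat
    obtain ⟨ε, hε, hεsep⟩ := hgap t
    have hminpos : 0 < min ε (t - a) := lt_min hε (by linarith)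
    refine ⟨min ε (t - a), hminpos, ?_, ?_⟩
    · intro r hr
      have h1 : t - (t - a) ≤ t - min ε (t - a) := by
        have := min_le_right ε (t - a); linarith
      refine ⟨by simp only [mem_Ioi]; have := hr.1; linarith, ?_⟩
      rintro ⟨m, rfl⟩
      have h2 : ts m ≠ t := ne_of_lt hr.2
      have h3 := hεsep m h2
      have h4 : |ts m - t| < min ε (t - a) :=
        abs_sub_lt_iff.mpr ⟨by linarith [hr.2, hminpos], by linarith [hr.1]⟩
      have := min_le_left ε (t - a)
      linarith
    · intro r hr
      refine ⟨by simp only [mem_Ioi]; have := hr.1; linarith, ?_⟩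
      rintro ⟨m, rfl⟩
      have h2 : ts m ≠ t := ne_of_gt hr.1
      have h3 := hεsep m h2
      have h4 : |ts m - t| < min ε (t - a) :=
        abs_sub_lt_iff.mpr ⟨by linarith [hr.2], by linarith [hr.1, hminpos]⟩
      have := min_le_left ε (t - a)
      linarith
  -- unique differentiability
  have hSud : UniqueDiffOn ℝ (Ici a \ D) := by
    intro p hp
    rcases eq_or_lt_of_le (mem_Ici.mp hp.1) with heq' | hpa
    · obtain ⟨δ, hδ, hsub⟩ := haO
      have h1 : UniqueDiffWithinAt ℝ (Ico p (p + δ)) p := by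
        refine (uniqueDiffOn_convex (convex_Ico _ _) ?_) p ⟨le_rfl, by linarith⟩
        rw [interior_Ico]
        exact ⟨p + δ/2, by constructor <;> [skip; skip] <;> simp <;> linarith⟩
      refine h1.mono ?_
      intro r hr
      rcases eq_or_lt_of_le hr.1 with rfl | hpr
      · exact hp
      · exact hOsubS (hsub ⟨by rw [← heq'] at hpr; exact hpr, by rw [heq']; exact hr.2⟩)
    · obtain ⟨δ, hδ, hsub⟩ := hOO p ⟨hpa, hp.2⟩
      exact (isOpen_Ioo.uniqueDiffWithinAt ⟨by linarith, by linarith⟩).mono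
        ((fun r hr => hOsubS (hsub hr)))
  -- neighborhoods within S
  have hSnhd : ∀ x ∈ Ioi a \ D, (Ici a \ D) ∈ 𝓝 x := by
    intro x hx
    obtain ⟨δ, hδ, hsub⟩ := hOO x hx
    exact Filter.mem_of_superset (Ioo_mem_nhds (by linarith) (by linarith))
      (fun r hr => hOsubS (hsub hr))
  have hfa : 𝓝[>] a ≤ 𝓝[Ici a \ D] a := by
    obtain ⟨δ, hδ, hsub⟩ := haO
    rw [← nhdsWithin_Ioo_eq_nhdsGT (show a < a + δ by linarith)]
    exact le_trans (nhdsWithin_mono _ (fun r hr => hOsubS (hsub hr)))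
      (le_refl _)
  -- basic regularity of uD and u'
  have hu_diffOn : DifferentiableOn ℝ uD (Ici a \ D) :=
    hC2.differentiableOn (by norm_num)
  have hu_contS : ContinuousOn uD (Ici a \ D) := hu_diffOn.continuousOn
  have hu'_contS : ContinuousOn u' (Ici a \ D) :=
    hC2.continuousOn_derivWithin hSud (by norm_num)
  have hu'_diffOn : DifferentiableOn ℝ u' (Ici a \ D) := by
    have h1 : ContDiffOn ℝ 1 u' (Ici a \ D) :=
      hC2.derivWithin hSud (by norm_num)
    exact h1.differentiableOn (by norm_num)
  have hu_hasD : ∀ x ∈ Ioi a \ D, HasDerivAt uD (u' x) x := by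
    intro x hx
    have h1 : DifferentiableAt ℝ uD x :=
      (hu_diffOn x (hOsubS hx)).differentiableAt (hSnhd x hx)
    have h2 : u' x = deriv uD x := derivWithin_of_mem_nhds (hSnhd x hx)
    rw [h2]
    exact h1.hasDerivAt
  have hu'_hasD : ∀ x ∈ Ioi a \ D, HasDerivAt u' (-(z * uD x)) x := by
    intro x hx
    have h1 : DifferentiableAt ℝ u' x :=
      (hu'_diffOn x (hOsubS hx)).differentiableAt (hSnhd x hx)
    have h2 : derivWithin u' (Ici a \ D) x = deriv u' x :=
      derivWithin_of_mem_nhds (hSnhd x hx)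
    have h3 := heq x (hOsubS hx)
    have h4 : deriv u' x = -(z * uD x) := by
      rw [← h2]; linear_combination -h3
    rw [← h4]
    exact h1.hasDerivAt
  -- the Wronskian-type quantity
  set W : ℝ → ℂ := fun r => u' r * (starRingEnd ℂ) (uD r) with hWdef
  have hW_hasD : ∀ x ∈ Ioi a \ D,
      HasDerivAt W ((Complex.normSq (u' x) : ℂ) - z * (Complex.normSq (uD x) : ℂ)) x := by
    intro x hx
    have h1 := (hu'_hasD x hx).mul ((hu_hasD x hx).star)
    have hval : (-(z * uD x)) * (star (uD x)) + u' x * (star (u' x))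
        = (Complex.normSq (u' x) : ℂ) - z * (Complex.normSq (uD x) : ℂ) := by
      have e1 : uD x * (starRingEnd ℂ) (uD x) = (Complex.normSq (uD x) : ℂ) :=
        Complex.mul_conj _
      have e2 : u' x * (starRingEnd ℂ) (u' x) = (Complex.normSq (u' x) : ℂ) :=
        Complex.mul_conj _
      calc (-(z * uD x)) * (star (uD x)) + u' x * (star (u' x))
          = -(z * (uD x * (starRingEnd ℂ) (uD x))) + u' x * (starRingEnd ℂ) (u' x) := by
            ring_nf; rfl
        _ = (Complex.normSq (u' x) : ℂ) - z * (Complex.normSq (uD x) : ℂ) := by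
            rw [e1, e2]; ring
    rw [← hval]
    exact h1
  -- interface data with one-sided filters
  have hatom : ∀ t ∈ D, a < t → ∃ b : ℝ, 1 < b ∧ ∃ uL uR duL duR : ℂ,
      Tendsto uD (𝓝[<] t) (𝓝 uL) ∧ Tendsto uD (𝓝[>] t) (𝓝 uR) ∧
      Tendsto u' (𝓝[<] t) (𝓝 duL) ∧ Tendsto u' (𝓝[>] t) (𝓝 duR) ∧
      uR = (Real.sqrt b : ℂ) * uL ∧ duR = duL / (Real.sqrt b : ℂ) := by
    rintro t ⟨n, rfl⟩ hat
    obtain ⟨uL, uR, duL, duR, h1, h2, h3, h4, h5, h6⟩ :=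
      hint n (by rw [interior_Ici]; exact hat)
    obtain ⟨δ, hδ, hsubL, hsubR⟩ := hDgapO (ts n) ⟨n, rfl⟩ hat
    have hopen : IsOpen (Ioo (ts n - δ) (ts n + δ)) := isOpen_Ioo
    have hmem : ts n ∈ Ioo (ts n - δ) (ts n + δ) := ⟨by linarith, by linarith⟩
    have hfL : 𝓝[(Ici a \ D) ∩ Iio (ts n)] (ts n) = 𝓝[<] (ts n) := by
      refine nhdsWithin_eq_nhdsWithin hmem hopen ?_
      ext r
      simp only [mem_inter_iff, mem_Iio, mem_Ioo]
      constructor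
      · rintro ⟨⟨_, hr2⟩, hr3⟩; exact ⟨hr2, hr3⟩
      · rintro ⟨hr1, hr2⟩
        exact ⟨⟨hOsubS (hsubL ⟨hr2.1, hr1⟩), hr1⟩, hr2⟩
    have hfR : 𝓝[(Ici a \ D) ∩ Ioi (ts n)] (ts n) = 𝓝[>] (ts n) := by
      refine nhdsWithin_eq_nhdsWithin hmem hopen ?_
      ext r
      simp only [mem_inter_iff, mem_Ioi, mem_Ioo]
      constructor
      · rintro ⟨⟨_, hr2⟩, hr3⟩; exact ⟨hr2, hr3⟩
      · rintro ⟨hr1, hr2⟩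
        exact ⟨⟨hOsubS (hsubR ⟨hr1, hr2.2⟩), hr1⟩, hr2⟩
    exact ⟨bs n, hbs n, uL, uR, duL, duR, hfL ▸ h1, hfR ▸ h2, hfL ▸ h3, hfR ▸ h4, h5, h6⟩
  -- jumps of W are continuous
  have hjumpW : ∀ t ∈ D, a < t → ∃ lL lR : ℂ, Tendsto W (𝓝[<] t) (𝓝 lL) ∧
      Tendsto W (𝓝[>] t) (𝓝 lR) ∧ lL = lR := by
    intro t htD hat
    obtain ⟨b, hb, uL, uR, duL, duR, h1, h2, h3, h4, h5, h6⟩ := hatom t htD hat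
    refine ⟨duL * (starRingEnd ℂ) uL, duR * (starRingEnd ℂ) uR,
      h3.mul ((Complex.continuous_conj.tendsto _).comp h1),
      h4.mul ((Complex.continuous_conj.tendsto _).comp h2), ?_⟩
    rw [h5, h6]
    have hsb : (Real.sqrt b : ℂ) ≠ 0 := by
      simp only [ne_eq, Complex.ofReal_eq_zero]
      positivity
    rw [map_mul, Complex.conj_ofReal]
    field_simp
  -- jumps of |u|² go up
  have hjumpN : ∀ t ∈ D, a < t → ∃ lL lR : ℝ,
      Tendsto (fun r => Complex.normSq (uD r)) (𝓝[<] t) (𝓝 lL) ∧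
      Tendsto (fun r => Complex.normSq (uD r)) (𝓝[>] t) (𝓝 lR) ∧ lL ≤ lR := by
    intro t htD hat
    obtain ⟨b, hb, uL, uR, duL, duR, h1, h2, h3, h4, h5, h6⟩ := hatom t htD hat
    refine ⟨Complex.normSq uL, Complex.normSq uR,
      (Complex.continuous_normSq.tendsto _).comp h1,
      (Complex.continuous_normSq.tendsto _).comp h2, ?_⟩
    rw [h5, Complex.normSq_mul, Complex.normSq_ofReal,
      Real.mul_self_sqrt (by linarith : (0:ℝ) ≤ b)]
    nlinarith [Complex.normSq_nonneg uL]
  -- value of W at a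
  have hWa0 : W a = 0 := by
    rw [hWdef]
    simp only [hDa, hDa', map_zero, mul_zero]
  -- right continuity at a
  have hWa : Tendsto W (𝓝[>] a) (𝓝 (W a)) := by
    have h1 : ContinuousWithinAt W (Ici a \ D) a :=
      (hu'_contS a haS).mul
        ((Complex.continuous_conj.continuousAt).comp_continuousWithinAt (hu_contS a haS))
    exact h1.tendsto.mono_left hfa
  have hNa : Tendsto (fun r => Complex.normSq (uD r)) (𝓝[>] a)
      (𝓝 (Complex.normSq (uD a))) := by
    have h1 : ContinuousWithinAt (fun r => Complex.normSq (uD r)) (Ici a \ D) a :=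
      (Complex.continuous_normSq.continuousAt).comp_continuousWithinAt (hu_contS a haS)
    exact h1.tendsto.mono_left hfa
  -- boundedness on compacts
  have hlim_u : ∀ t ∈ D, a < t → (∃ l, Tendsto uD (𝓝[<] t) (𝓝 l)) ∧
      (∃ l, Tendsto uD (𝓝[>] t) (𝓝 l)) := by
    intro t htD hat
    obtain ⟨b, hb, uL, uR, duL, duR, h1, h2, h3, h4, h5, h6⟩ := hatom t htD hat
    exact ⟨⟨uL, h1⟩, ⟨uR, h2⟩⟩
  have hlim_u' : ∀ t ∈ D, a < t → (∃ l, Tendsto u' (𝓝[<] t) (𝓝 l)) ∧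
      (∃ l, Tendsto u' (𝓝[>] t) (𝓝 l)) := by
    intro t htD hat
    obtain ⟨b, hb, uL, uR, duL, duR, h1, h2, h3, h4, h5, h6⟩ := hatom t htD hat
    exact ⟨⟨duL, h3⟩, ⟨duR, h4⟩⟩
  have hbdd_u : ∀ b, ∃ c, ∀ r ∈ (Ici a \ D) ∩ Icc a b, ‖uD r‖ ≤ c :=
    fun b => LP_bdd a b D haD uD hu_contS hlim_u
  have hbdd_u' : ∀ b, ∃ c, ∀ r ∈ (Ici a \ D) ∩ Icc a b, ‖u' r‖ ≤ c :=
    fun b => LP_bdd a b D haD u' hu'_contS hlim_u'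
  -- IntegrableOn facts
  have hInt_nsq_u : ∀ b, IntegrableOn (fun r => Complex.normSq (uD r)) (Icc a b) volume := by
    intro b
    refine LP_integrableOn a b D hDc _
      (Complex.continuous_normSq.comp_continuousOn (hu_contS.mono hOsubS)) ?_
    obtain ⟨c, hc⟩ := hbdd_u b
    refine ⟨c ^ 2, fun r hr => ?_⟩
    rw [abs_of_nonneg (Complex.normSq_nonneg _), Complex.normSq_eq_norm_sq]
    exact pow_le_pow_left₀ (norm_nonneg _) (hc r hr) 2
  have hInt_nsq_u' : ∀ b, IntegrableOn (fun r => Complex.normSq (u' r)) (Icc a b) volume := by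
    intro b
    refine LP_integrableOn a b D hDc _
      (Complex.continuous_normSq.comp_continuousOn (hu'_contS.mono hOsubS)) ?_
    obtain ⟨c, hc⟩ := hbdd_u' b
    refine ⟨c ^ 2, fun r hr => ?_⟩
    rw [abs_of_nonneg (Complex.normSq_nonneg _), Complex.normSq_eq_norm_sq]
    exact pow_le_pow_left₀ (norm_nonneg _) (hc r hr) 2
  have hW_contO : ContinuousOn W (Ioi a \ D) :=
    (hu'_contS.mono hOsubS).mul
      (Complex.continuous_conj.comp_continuousOn (hu_contS.mono hOsubS))
  have hInt_Wre : ∀ b, IntegrableOn (fun r => (W r).re) (Icc a b) volume := by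
    intro b
    refine LP_integrableOn a b D hDc _
      (Complex.continuous_re.comp_continuousOn hW_contO) ?_
    obtain ⟨c, hc⟩ := hbdd_u b
    obtain ⟨c', hc'⟩ := hbdd_u' b
    refine ⟨c' * c, fun r hr => ?_⟩
    have h1 : |(W r).re| ≤ ‖W r‖ := Complex.abs_re_le_norm _
    have h2 : ‖W r‖ = ‖u' r‖ * ‖uD r‖ := by
      rw [hWdef]
      simp only [norm_mul]
      rw [Complex.norm_conj]
    have h3 : ‖u' r‖ * ‖uD r‖ ≤ c' * c :=
      mul_le_mul (hc' r hr) (hc r hr) (norm_nonneg _)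
        (le_trans (norm_nonneg _) (hc' r hr))
    calc |(W r).re| ≤ ‖W r‖ := h1
      _ = ‖u' r‖ * ‖uD r‖ := h2
      _ ≤ c' * c := h3
  -- interval integrability helper
  have hii : ∀ (g : ℝ → ℝ), (∀ b, IntegrableOn g (Icc a b) volume) →
      ∀ p q, a ≤ p → a ≤ q → IntervalIntegrable g volume p q := by
    intro g hg p q hp hq
    rw [intervalIntegrable_iff]
    exact (hg (max p q)).mono_set
      (fun r hr => ⟨le_trans (le_min hp hq) (le_of_lt hr.1), hr.2⟩)
  -- real/imaginary part derivative helpers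
  have hre : ∀ {f : ℝ → ℂ} {c : ℂ} {x : ℝ}, HasDerivAt f c x →
      HasDerivAt (fun y => (f y).re) c.re x := by
    intro f c x h
    exact Complex.reCLM.hasFDerivAt.comp_hasDerivAt x h
  have him : ∀ {f : ℝ → ℂ} {c : ℂ} {x : ℝ}, HasDerivAt f c x →
      HasDerivAt (fun y => (f y).im) c.im x := by
    intro f c x h
    exact Complex.imCLM.hasFDerivAt.comp_hasDerivAt x h
  have tre : ∀ {g : ℝ → ℂ} {l : Filter ℝ} {c : ℂ}, Tendsto g l (𝓝 c) →
      Tendsto (fun r => (g r).re) l (𝓝 c.re) :=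
    fun h => (Complex.continuous_re.tendsto _).comp h
  have tim : ∀ {g : ℝ → ℂ} {l : Filter ℝ} {c : ℂ}, Tendsto g l (𝓝 c) →
      Tendsto (fun r => (g r).im) l (𝓝 c.im) :=
    fun h => (Complex.continuous_im.tendsto _).comp h
  -- identities via the piecing lemma
  set A : ℝ → ℝ := fun y => ∫ r in a..y, Complex.normSq (uD r) with hAdef
  set B : ℝ → ℝ := fun y => ∫ r in a..y, Complex.normSq (u' r) with hBdef
  have hφre_int : ∀ b, IntegrableOn
      (fun r => Complex.normSq (u' r) - z.re * Complex.normSq (uD r)) (Icc a b) volume :=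
    fun b => (hInt_nsq_u' b).sub ((hInt_nsq_u b).const_mul z.re)
  have hφim_int : ∀ b, IntegrableOn
      (fun r => -(z.im * Complex.normSq (uD r))) (Icc a b) volume :=
    fun b => ((hInt_nsq_u b).const_mul z.im).neg
  have hRe : ∀ y ∈ Ici a \ D, (W y).re = B y - z.re * A y := by
    intro y hy
    have h1 := LP_piecing a D hDgapO (fun r => (W r).re)
      (fun r => Complex.normSq (u' r) - z.re * Complex.normSq (uD r))
      (fun x hx => by
        have h := hre (hW_hasD x hx)
        simpa [Complex.sub_re, Complex.mul_re, Complex.ofReal_re, Complex.ofReal_im] using h)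
      (tre hWa) haO hOO
      (fun t ht hat => by
        obtain ⟨lL, lR, hL, hR, hEq⟩ := hjumpW t ht hat
        exact ⟨lL.re, lR.re, tre hL, tre hR, by rw [hEq]⟩)
      hφre_int a y haS hy hy.1
    have h2 := LP_piecing a D hDgapO (fun r => -(W r).re)
      (fun r => -(Complex.normSq (u' r) - z.re * Complex.normSq (uD r)))
      (fun x hx => by
        have h := (hre (hW_hasD x hx)).fun_neg
        simpa [Complex.sub_re, Complex.mul_re, Complex.ofReal_re, Complex.ofReal_im] using h)
      ((tre hWa).neg) haO hOO
      (fun t ht hat => by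
        obtain ⟨lL, lR, hL, hR, hEq⟩ := hjumpW t ht hat
        exact ⟨-lL.re, -lR.re, (tre hL).neg, (tre hR).neg, by rw [hEq]⟩)
      (fun b => (hφre_int b).neg) a y haS hy hy.1
    rw [intervalIntegral.integral_neg] at h2
    have h3 : (∫ r in a..y, (Complex.normSq (u' r) - z.re * Complex.normSq (uD r)))
        = B y - z.re * A y := by
      rw [intervalIntegral.integral_sub (hii _ hInt_nsq_u' a y le_rfl hy.1)
        ((hii _ hInt_nsq_u a y le_rfl hy.1).const_mul z.re),
        intervalIntegral.integral_const_mul]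
    simp only [hWa0, Complex.zero_re] at h1 h2
    rw [h3] at h1 h2
    linarith
  have hIm : ∀ y ∈ Ici a \ D, (W y).im = -(z.im * A y) := by
    intro y hy
    have h1 := LP_piecing a D hDgapO (fun r => (W r).im)
      (fun r => -(z.im * Complex.normSq (uD r)))
      (fun x hx => by
        have h := him (hW_hasD x hx)
        simpa [Complex.sub_im, Complex.mul_im, Complex.ofReal_re, Complex.ofReal_im] using h)
      (tim hWa) haO hOO
      (fun t ht hat => by
        obtain ⟨lL, lR, hL, hR, hEq⟩ := hjumpW t ht hat
        exact ⟨lL.im, lR.im, tim hL, tim hR, by rw [hEq]⟩)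
      hφim_int a y haS hy hy.1
    have h2 := LP_piecing a D hDgapO (fun r => -(W r).im)
      (fun r => -(-(z.im * Complex.normSq (uD r))))
      (fun x hx => by
        have h := (him (hW_hasD x hx)).fun_neg
        simpa [Complex.sub_im, Complex.mul_im, Complex.ofReal_re, Complex.ofReal_im] using h)
      ((tim hWa).neg) haO hOO
      (fun t ht hat => by
        obtain ⟨lL, lR, hL, hR, hEq⟩ := hjumpW t ht hat
        exact ⟨-lL.im, -lR.im, (tim hL).neg, (tim hR).neg, by rw [hEq]⟩)
      (fun b => (hφim_int b).neg) a y haS hy hy.1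
    rw [intervalIntegral.integral_neg] at h2
    have h3 : (∫ r in a..y, -(z.im * Complex.normSq (uD r))) = -(z.im * A y) := by
      rw [intervalIntegral.integral_neg, intervalIntegral.integral_const_mul]
    simp only [hWa0, Complex.zero_im] at h1 h2
    rw [h3] at h1 h2
    linarith
  -- monotonicity and nonnegativity of A
  have hAnn : ∀ y, a ≤ y → 0 ≤ A y :=
    fun y hy => intervalIntegral.integral_nonneg hy (fun r _ => Complex.normSq_nonneg _)
  have hAmono : ∀ p q, a ≤ p → p ≤ q → A p ≤ A q := by
    intro p q hap hpq
    have hadd := intervalIntegral.integral_add_adjacent_intervals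
      (hii _ hInt_nsq_u a p le_rfl hap) (hii _ hInt_nsq_u p q hap (le_trans hap hpq))
    have hnn : 0 ≤ ∫ r in p..q, Complex.normSq (uD r) :=
      intervalIntegral.integral_nonneg hpq (fun r _ => Complex.normSq_nonneg _)
    have : A p + (∫ r in p..q, Complex.normSq (uD r)) = A q := hadd
    linarith
  -- a.e.-measurability helper
  have haemeas : ∀ (f : ℝ → ℝ), ContinuousOn f (Ioi a \ D) →
      AEMeasurable (fun r => ENNReal.ofReal (f r)) (volume.restrict (Ioi a)) := by
    intro f hf
    have hDm : MeasurableSet (Ioi a \ D) := measurableSet_Ioi.diff hDc.measurableSet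
    have hae : (Ioi a : Set ℝ) =ᵐ[volume] (Ioi a \ D : Set ℝ) := by
      rw [Filter.eventuallyEq_set]
      filter_upwards [measure_eq_zero_iff_ae_notMem.mp (hDc.measure_zero volume)] with r hr
      simp only [mem_diff]
      exact ⟨fun h => ⟨h, hr⟩, fun h => h.1⟩
    rw [Measure.restrict_congr_set hae]
    exact (ENNReal.continuous_ofReal.comp_continuousOn hf).aemeasurable hDm
  have hmeasA : AEMeasurable (fun r => ENNReal.ofReal (Complex.normSq (uD r)))
      (volume.restrict (Ioi a)) :=
    haemeas _ (Complex.continuous_normSq.comp_continuousOn (hu_contS.mono hOsubS))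
  have hmeasB : AEMeasurable (fun r => ENNReal.ofReal (Complex.normSq (u' r)))
      (volume.restrict (Ioi a)) :=
    haemeas _ (Complex.continuous_normSq.comp_continuousOn (hu'_contS.mono hOsubS))
  -- a point b₀ > a with A b₀ > 0
  obtain ⟨δa, hδa, hsubA⟩ := id haO
  have hder1 : HasDerivWithinAt uD 1 (Ici a \ D) a := by
    have h := (hu_diffOn a haS).hasDerivWithinAt
    rwa [show derivWithin uD (Ici a \ D) a = 1 from hDa'] at h
  have hex : ∃ w, w ∈ Ioo a (a + δa) ∧ uD w ≠ 0 := by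
    by_contra hcon
    push_neg at hcon
    have hslope := hasDerivWithinAt_iff_tendsto_slope.mp hder1
    have hsub2 : Ioo a (a + δa) ⊆ (Ici a \ D) \ {a} := by
      intro r hr
      refine ⟨hOsubS (hsubA hr), ?_⟩
      simp only [mem_singleton_iff]
      exact ne_of_gt hr.1
    have h0 : Tendsto (slope uD a) (𝓝[>] a) (𝓝 1) := by
      have h := hslope.mono_left (nhdsWithin_mono _ hsub2)
      rwa [nhdsWithin_Ioo_eq_nhdsGT (by linarith : a < a + δa)] at h
    have h1 : Tendsto (slope uD a) (𝓝[>] a) (𝓝 0) := by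
      refine Tendsto.congr' ?_ tendsto_const_nhds
      filter_upwards [Ioo_mem_nhdsGT_of_mem (show a ∈ Ico a (a + δa) from ⟨le_rfl, by linarith⟩)] with w hw
      simp [slope, hcon w hw, hDa]
    exact one_ne_zero (tendsto_nhds_unique h0 h1)
  obtain ⟨w₀, hw₀Ioo, hw₀ne⟩ := hex
  have hw₀O : w₀ ∈ Ioi a \ D := hsubA hw₀Ioo
  obtain ⟨δ₀, hδ₀, hsub₀⟩ := hOO w₀ hw₀O
  set m₀ : ℝ := Complex.normSq (uD w₀) / 2 with hm₀def
  have hnsqpos : 0 < Complex.normSq (uD w₀) := Complex.normSq_pos.mpr hw₀ne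
  have hm₀ : 0 < m₀ := by rw [hm₀def]; linarith
  have hct : ContinuousAt (fun r => Complex.normSq (uD r)) w₀ :=
    Complex.continuous_normSq.continuousAt.comp
      ((hu_hasD w₀ hw₀O).differentiableAt.continuousAt)
  have hev : {r : ℝ | m₀ < Complex.normSq (uD r)} ∈ 𝓝 w₀ := by
    have := hct (Ioi_mem_nhds (show m₀ < Complex.normSq (uD w₀) by rw [hm₀def]; linarith))
    exact this
  obtain ⟨η, hη, hball⟩ := Metric.mem_nhds_iff.mp hev
  set η' : ℝ := min (η / 2) (δ₀ / 2) with hη'def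
  have hη' : 0 < η' := lt_min (by linarith) (by linarith)
  set b₀ : ℝ := w₀ + η' with hb₀def
  have hb₀O : b₀ ∈ Ioi a \ D := by
    refine hsub₀ ⟨by rw [hb₀def]; linarith, ?_⟩
    rw [hb₀def]
    have : η' ≤ δ₀ / 2 := min_le_right _ _
    linarith
  have haw' : a < w₀ - η' := by
    have h := (hsub₀ (show w₀ - δ₀/2 ∈ Ioo (w₀ - δ₀) (w₀ + δ₀) from ⟨by linarith, by linarith⟩)).1
    simp only [mem_Ioi] at h
    have : η' ≤ δ₀ / 2 := min_le_right _ _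
    linarith
  have hab₀ : a < b₀ := by rw [hb₀def]; linarith [hw₀Ioo.1]
  have hm₀le : ∀ r ∈ Icc (w₀ - η') (w₀ + η'), m₀ ≤ Complex.normSq (uD r) := by
    intro r hr
    have h1 : η' ≤ η / 2 := min_le_left _ _
    have hd : dist r w₀ < η := by
      rw [Real.dist_eq]
      have := abs_sub_le_iff.mpr (⟨by linarith [hr.2], by linarith [hr.1]⟩ :
        r - w₀ ≤ η' ∧ w₀ - r ≤ η')
      linarith [this]
    exact le_of_lt (hball (Metric.mem_ball.mpr hd))
  have hAb₀ : 0 < A b₀ := by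
    have h1 : A (w₀ - η') + (∫ r in (w₀ - η')..b₀, Complex.normSq (uD r)) = A b₀ :=
      intervalIntegral.integral_add_adjacent_intervals
        (hii _ hInt_nsq_u a (w₀ - η') le_rfl haw'.le)
        (hii _ hInt_nsq_u (w₀ - η') b₀ haw'.le hab₀.le)
    have h2 : 0 ≤ A (w₀ - η') := hAnn _ haw'.le
    have h3 : m₀ * (b₀ - (w₀ - η')) ≤ ∫ r in (w₀ - η')..b₀, Complex.normSq (uD r) := by
      have h4 := intervalIntegral.integral_mono_on
        (show w₀ - η' ≤ b₀ by rw [hb₀def]; linarith)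
        (intervalIntegrable_const (c := m₀))
        (hii _ hInt_nsq_u (w₀ - η') b₀ haw'.le hab₀.le)
        (fun r hr => hm₀le r ⟨hr.1, by rw [hb₀def] at hr; exact hr.2⟩)
      rwa [intervalIntegral.integral_const, smul_eq_mul, mul_comm] at h4
    have h5 : 0 < m₀ * (b₀ - (w₀ - η')) := mul_pos hm₀ (by rw [hb₀def]; linarith)
    linarith
  -- derivative of |u|²
  have hnsq_hasD : ∀ x ∈ Ioi a \ D,
      HasDerivAt (fun r => Complex.normSq (uD r)) (2 * (W x).re) x := by
    intro x hx
    have h1 := (hu_hasD x hx).fun_mul ((hu_hasD x hx).star)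
    have h2 := hre h1
    have hfun : (fun y => (uD y * star (uD y)).re) = fun y => Complex.normSq (uD y) := by
      funext y
      rw [show (star (uD y)) = (starRingEnd ℂ) (uD y) from rfl, Complex.mul_conj]
      simp
    rw [hfun] at h2
    convert h2 using 1
    have h3 : uD x * star (u' x) = star (u' x * star (uD x)) := by
      rw [star_mul, star_star]
    have h4 : (star (u' x * star (uD x))).re = (u' x * star (uD x)).re :=
      Complex.conj_re _
    have h5 : W x = u' x * star (uD x) := rfl
    rw [Complex.add_re, h3, h4, h5]
    ring
  have hφv_int : ∀ b, IntegrableOn (fun r => 2 * (W r).re) (Icc a b) volume :=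
    fun b => (hInt_Wre b).const_mul 2
  have hnorm : ∀ w : ℂ, ‖w‖ ^ 2 = Complex.normSq w := by
    intro w
    rw [Complex.normSq_eq_norm_sq]
  -- the central claim
  have key : (∫⁻ r in Ioi a, ENNReal.ofReal (Complex.normSq (uD r))) = ⊤ := by
    by_contra hM
    have hMlt : (∫⁻ r in Ioi a, ENNReal.ofReal (Complex.normSq (uD r))) < ⊤ :=
      lt_top_iff_ne_top.mpr hM
    set M' : ℝ := (∫⁻ r in Ioi a, ENNReal.ofReal (Complex.normSq (uD r))).toReal with hM'def
    have hAle : ∀ y, a ≤ y → A y ≤ M' := by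
      intro y hy
      have h1 : ENNReal.ofReal (A y)
          = ∫⁻ r in Ioc a y, ENNReal.ofReal (Complex.normSq (uD r)) := by
        rw [hAdef]
        simp only
        rw [intervalIntegral.integral_of_le hy]
        exact ofReal_integral_eq_lintegral_ofReal
          ((hInt_nsq_u y).mono_set Ioc_subset_Icc_self)
          (Eventually.of_forall (fun r => Complex.normSq_nonneg _))
      have h2 : (∫⁻ r in Ioc a y, ENNReal.ofReal (Complex.normSq (uD r)))
          ≤ ∫⁻ r in Ioi a, ENNReal.ofReal (Complex.normSq (uD r)) :=
        lintegral_mono' (Measure.restrict_mono Ioc_subset_Ioi_self le_rfl) le_rfl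
      calc A y = (ENNReal.ofReal (A y)).toReal := (ENNReal.toReal_ofReal (hAnn y hy)).symm
        _ ≤ M' := ENNReal.toReal_mono hM (h1 ▸ h2)
    have hBtop : (∫⁻ r in Ioi a, ENNReal.ofReal (Complex.normSq (u' r))) = ⊤ := by
      by_contra hB
      have hprod_fin : (∫⁻ r in Ioi a, ENNReal.ofReal (‖u' r‖ * ‖uD r‖)) < ⊤ := by
        have hle : ∀ r, ENNReal.ofReal (‖u' r‖ * ‖uD r‖)
            ≤ ENNReal.ofReal (Complex.normSq (u' r)) + ENNReal.ofReal (Complex.normSq (uD r)) := by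
          intro r
          rw [← ENNReal.ofReal_add (Complex.normSq_nonneg _) (Complex.normSq_nonneg _)]
          apply ENNReal.ofReal_le_ofReal
          rw [← hnorm, ← hnorm]
          nlinarith [sq_nonneg (‖u' r‖ - ‖uD r‖), norm_nonneg (u' r), norm_nonneg (uD r)]
        calc (∫⁻ r in Ioi a, ENNReal.ofReal (‖u' r‖ * ‖uD r‖))
            ≤ ∫⁻ r in Ioi a, (ENNReal.ofReal (Complex.normSq (u' r))
              + ENNReal.ofReal (Complex.normSq (uD r))) := lintegral_mono hle
          _ = (∫⁻ r in Ioi a, ENNReal.ofReal (Complex.normSq (u' r)))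
              + ∫⁻ r in Ioi a, ENNReal.ofReal (Complex.normSq (uD r)) :=
            lintegral_add_left' hmeasB _
          _ < ⊤ := ENNReal.add_lt_top.mpr ⟨lt_top_iff_ne_top.mpr hB, hMlt⟩
      have hlow : ∀ r, r ∈ Ioi b₀ → r ∉ D → z.im * A b₀ ≤ ‖u' r‖ * ‖uD r‖ := by
        intro r hr hrD
        have har : a ≤ r := le_of_lt (lt_trans hab₀ hr)
        have hrS : r ∈ Ici a \ D := ⟨har, hrD⟩
        have h3 := hIm r hrS
        have h4 : A b₀ ≤ A r := hAmono b₀ r hab₀.le (le_of_lt hr)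
        have h5 : z.im * A b₀ ≤ z.im * A r := mul_le_mul_of_nonneg_left h4 hz.le
        have h6 : |(W r).im| = z.im * A r := by
          rw [h3, abs_neg, abs_of_nonneg (mul_nonneg hz.le (hAnn r har))]
        have h7 : |(W r).im| ≤ ‖W r‖ := Complex.abs_im_le_norm _
        have h8 : ‖W r‖ = ‖u' r‖ * ‖uD r‖ := by
          rw [hWdef]
          simp only [norm_mul]
          rw [Complex.norm_conj]
        linarith
      have hae2 : ∀ᵐ r ∂volume.restrict (Ioi b₀), z.im * A b₀ ≤ ‖u' r‖ * ‖uD r‖ := by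
        filter_upwards [ae_restrict_mem measurableSet_Ioi,
          ae_restrict_of_ae (measure_eq_zero_iff_ae_notMem.mp (hDc.measure_zero volume))]
          with r h1 h2
        exact hlow r h1 h2
      have hbot : (⊤ : ENNReal) ≤ ∫⁻ r in Ioi a, ENNReal.ofReal (‖u' r‖ * ‖uD r‖) := by
        have e0 : (⊤ : ENNReal) = ENNReal.ofReal (z.im * A b₀) * volume (Ioi b₀) := by
          rw [Real.volume_Ioi, ENNReal.mul_top
            (ENNReal.ofReal_pos.mpr (mul_pos hz hAb₀)).ne']
        calc (⊤ : ENNReal) = ENNReal.ofReal (z.im * A b₀) * volume (Ioi b₀) := e0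
          _ = ∫⁻ _ in Ioi b₀, ENNReal.ofReal (z.im * A b₀) := (setLIntegral_const _ _).symm
          _ ≤ ∫⁻ r in Ioi b₀, ENNReal.ofReal (‖u' r‖ * ‖uD r‖) :=
            lintegral_mono_ae (hae2.mono fun r h => ENNReal.ofReal_le_ofReal h)
          _ ≤ ∫⁻ r in Ioi a, ENNReal.ofReal (‖u' r‖ * ‖uD r‖) :=
            lintegral_mono' (Measure.restrict_mono (Ioi_subset_Ioi hab₀.le) le_rfl) le_rfl
      exact absurd (lt_of_le_of_lt hbot hprod_fin) (lt_irrefl _)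
    have hBtend : Tendsto B atTop atTop :=
      LP_tendsto_integral_atTop a _ (fun r => Complex.normSq_nonneg _)
        hInt_nsq_u' hmeasB hBtop
    obtain ⟨R₀, hR₀⟩ := Filter.eventually_atTop.mp
      (Filter.Tendsto.eventually_ge_atTop hBtend (1 + |z.re| * M'))
    have hWre1 : ∀ y ∈ Ici a \ D, R₀ ≤ y → 1 ≤ (W y).re := by
      intro y hy hRy
      have h1 := hRe y hy
      have h2 := hR₀ y hRy
      have h3 : z.re * A y ≤ |z.re| * M' := by
        calc z.re * A y ≤ |z.re| * A y :=
            mul_le_mul_of_nonneg_right (le_abs_self _) (hAnn y hy.1)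
          _ ≤ |z.re| * M' := mul_le_mul_of_nonneg_left (hAle y hy.1) (abs_nonneg _)
      linarith
    -- find a good point x₀ ≥ R₀ off the atoms
    obtain ⟨ε₁, hε₁, hε₁sep⟩ := hgap (max R₀ (a + 1))
    set p : ℝ := max R₀ (a + 1) with hpdef
    set x₀ : ℝ := p + min ε₁ 1 / 2 with hx₀def
    have hminpos : 0 < min ε₁ 1 := lt_min hε₁ one_pos
    have hpx₀ : p < x₀ := by rw [hx₀def]; linarith
    have hax₀ : a < x₀ := by
      have : a + 1 ≤ p := le_max_right _ _
      linarith
    have hx₀D : x₀ ∉ D := by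
      rintro ⟨m, hm⟩
      have h1 : ts m ≠ p := by rw [hm]; exact ne_of_gt hpx₀
      have h2 := hε₁sep m h1
      rw [hm] at h2
      have h3 : |x₀ - p| = min ε₁ 1 / 2 := by
        rw [hx₀def]; rw [abs_of_pos] <;> [ring; linarith]
      rw [h3] at h2
      have := min_le_left ε₁ 1
      linarith
    have hx₀S : x₀ ∈ Ici a \ D := ⟨hax₀.le, hx₀D⟩
    have hR₀x₀ : R₀ ≤ x₀ := le_trans (le_max_left _ _) hpx₀.le
    -- |u|² grows linearly past x₀
    have hgrow : ∀ y ∈ Ici a \ D, x₀ ≤ y → 2 * (y - x₀) ≤ Complex.normSq (uD y) := by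
      intro y hy hx₀y
      have h1 := LP_piecing a D hDgapO (fun r => Complex.normSq (uD r))
        (fun r => 2 * (W r).re) hnsq_hasD hNa haO hOO
        (fun t ht hat => hjumpN t ht hat) hφv_int x₀ y hx₀S hy hx₀y
      have h2 : (∫ r in x₀..y, (2:ℝ)) ≤ ∫ r in x₀..y, 2 * (W r).re := by
        refine intervalIntegral.integral_mono_ae_restrict hx₀y
          (intervalIntegrable_const) (hii _ hφv_int x₀ y hax₀.le (le_trans hax₀.le hx₀y)) ?_
        filter_upwards [ae_restrict_mem measurableSet_Icc,
          ae_restrict_of_ae (measure_eq_zero_iff_ae_notMem.mp (hDc.measure_zero volume))]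
          with r h3 h4
        have h5 : 1 ≤ (W r).re := hWre1 r ⟨le_trans hax₀.le h3.1, h4⟩
          (le_trans hR₀x₀ h3.1)
        show (2:ℝ) ≤ 2 * (W r).re
        linarith
      have h3 : (∫ r in x₀..y, (2:ℝ)) = 2 * (y - x₀) := by
        rw [intervalIntegral.integral_const, smul_eq_mul, mul_comm]
      have h4 : 0 ≤ Complex.normSq (uD x₀) := Complex.normSq_nonneg _
      have h1' : Complex.normSq (uD x₀) + (∫ r in x₀..y, 2 * (W r).re)
          ≤ Complex.normSq (uD y) := h1
      linarith
    -- hence ∫|u|² = ∞, contradiction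
    have hae3 : ∀ᵐ r ∂volume.restrict (Ioi (x₀ + 1)),
        ENNReal.ofReal 2 ≤ ENNReal.ofReal (Complex.normSq (uD r)) := by
      filter_upwards [ae_restrict_mem measurableSet_Ioi,
        ae_restrict_of_ae (measure_eq_zero_iff_ae_notMem.mp (hDc.measure_zero volume))]
        with r h1 h2
      have h3 : x₀ ≤ r := by have := mem_Ioi.mp h1; linarith
      have h4 := hgrow r ⟨le_trans hax₀.le h3, h2⟩ h3
      refine ENNReal.ofReal_le_ofReal ?_
      have := mem_Ioi.mp h1
      linarith
    have hbot2 : (⊤ : ENNReal) ≤ ∫⁻ r in Ioi a, ENNReal.ofReal (Complex.normSq (uD r)) := by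
      have e0 : (⊤ : ENNReal) = ENNReal.ofReal 2 * volume (Ioi (x₀ + 1)) := by
        rw [Real.volume_Ioi, ENNReal.mul_top (by norm_num : ENNReal.ofReal 2 ≠ 0)]
      calc (⊤ : ENNReal) = ENNReal.ofReal 2 * volume (Ioi (x₀ + 1)) := e0
        _ = ∫⁻ _ in Ioi (x₀ + 1), ENNReal.ofReal 2 := (setLIntegral_const _ _).symm
        _ ≤ ∫⁻ r in Ioi (x₀ + 1), ENNReal.ofReal (Complex.normSq (uD r)) :=
          lintegral_mono_ae hae3
        _ ≤ ∫⁻ r in Ioi a, ENNReal.ofReal (Complex.normSq (uD r)) :=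
          lintegral_mono' (Measure.restrict_mono (Ioi_subset_Ioi (by linarith)) le_rfl) le_rfl
    exact absurd (lt_of_le_of_lt hbot2 hMlt) (lt_irrefl _)
  -- conclusion
  constructor
  · simp only [hnorm]
    exact key
  · have hAtend : Tendsto A atTop atTop :=
      LP_tendsto_integral_atTop a _ (fun r => Complex.normSq_nonneg _)
        hInt_nsq_u hmeasA key
    have h2 : Tendsto (fun b => 2 * z.im * A b) atTop atTop :=
      hAtend.const_mul_atTop (by linarith : (0:ℝ) < 2 * z.im)
    have h3 : Tendsto (fun b => (2 * z.im * A b)⁻¹) atTop (𝓝 0) :=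
      tendsto_inv_atTop_zero.comp h2
    have h4 : (fun b : ℝ => 1 / (2 * z.im * ∫ r in a..b, ‖uD r‖ ^ 2))
        = fun b => (2 * z.im * A b)⁻¹ := by
      funext b
      rw [one_div, hAdef]
      congr 2
      exact intervalIntegral.integral_congr (fun r _ => hnorm (uD r))
    rw [h4]
    exact h3
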